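/- Let A be a unital C*-algebra and let u, v be unitaries lying in two different connected components of the unitary group 𝒰(A). Then ‖u - v‖ = 2. -/

import Mathlib

open NormedSpace Complex

/-- A unitary at distance `< 2` from `1` lies in the connected component of `1`. -/
lemma aux_near_one {A : Type*} [NormedRing A] [StarRing A] [CStarRing A]
    [NormedAlgebra ℂ A] [StarModule ℂ A] [CompleteSpace A]
    {w : A} (hw : w ∈ unitary A) (hnorm : ‖(1 : A) - w‖ < 2) :
    w ∈ connectedComponentIn (unitary A : Set A) 1 := by
  letI : CStarAlgebra A :=
    { ‹NormedRing A›, ‹StarRing A›, ‹CompleteSpace A›, ‹CStarRing A›,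
      ‹NormedAlgebra ℂ A›, ‹StarModule ℂ A› with }
  rcases subsingleton_or_nontrivial A with hA | hA
  · exact Subsingleton.elim (1 : A) w ▸ mem_connectedComponentIn (one_mem (unitary A))
  have hwn : IsStarNormal w := isStarNormal_of_mem_unitary hw
  -- `-1` is not in the spectrum of `w`
  have hne : (-1 : ℂ) ∉ spectrum ℂ w := by
    intro h
    have h2 : (2 : ℂ) ∈ spectrum ℂ ((1 : A) - w) := by
      rw [spectrum.mem_iff] at h ⊢
      intro hiu
      apply h
      have : algebraMap ℂ A 2 - ((1 : A) - w) = -(algebraMap ℂ A (-1) - w) := by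
        have h2' : algebraMap ℂ A 2 = (2 : A) := map_ofNat _ 2
        have h1' : algebraMap ℂ A (-1) = (-1 : A) := by simp
        rw [h2', h1', show (2:A) = 1 + 1 by norm_num]
        abel
      rw [this] at hiu
      exact neg_neg ((algebraMap ℂ A) (-1) - w) ▸ hiu.neg
    have := spectrum.norm_le_norm_of_mem h2
    simp only [Complex.norm_ofNat] at this
    linarith
  -- the spectrum lies on the circle
  have hcirc : spectrum ℂ w ⊆ (unitary ℂ : Set ℂ) :=
    spectrum_subset_unitary_of_mem_unitary hw
  have habs : ∀ z ∈ spectrum ℂ w, ‖z‖ = 1 := by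
    intro z hz
    have := SetLike.mem_coe.mp (hcirc hz)
    rw [Unitary.mem_iff_star_mul_self] at this
    have : (Complex.normSq z : ℂ) = 1 := by
      rw [Complex.normSq_eq_conj_mul_self, ← Complex.star_def]; exact this
    have hnsq : Complex.normSq z = 1 := by exact_mod_cast this
    rw [← Complex.sq_norm] at hnsq
    nlinarith [norm_nonneg z]
  -- spectrum avoids the negative real axis
  have hslit : ∀ z ∈ spectrum ℂ w, z ∈ Complex.slitPlane := by
    intro z hz
    rcases eq_or_ne z.im 0 with him | him
    · left
      have habs' := habs z hz
      have hzr : z = (z.re : ℂ) := by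
        exact Complex.ext rfl (by simpa using him)
      rw [hzr, Complex.norm_real, Real.norm_eq_abs] at habs'
      rcases abs_eq (by norm_num : (0:ℝ) ≤ 1) |>.mp habs' with h1 | h1
      · rw [hzr, h1]; norm_num
      · exfalso
        apply hne
        have : z = -1 := by rw [hzr, h1]; norm_num
        rwa [this] at hz
    · right; exact him
  -- the self-adjoint "argument"
  set f : ℂ → ℂ := fun z => ((Complex.arg z : ℝ) : ℂ) with hf_def
  have hf : ContinuousOn f (spectrum ℂ w) := by
    intro z hz
    exact (Complex.continuous_ofReal.continuousAt.comp
      (Complex.continuousAt_arg (hslit z hz))).continuousWithinAt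
  set a : A := cfc f w with ha_def
  have ha : IsSelfAdjoint a := by
    rw [IsSelfAdjoint, ha_def, ← cfc_star]
    exact cfc_congr fun z _ => by simp [hf_def]
  -- the key identity : `exp ℂ (I • a) = w`
  have hg : ContinuousOn (fun z => Complex.I * f z) (spectrum ℂ w) :=
    continuousOn_const.mul hf
  have hIa : Complex.I • a = cfc (fun z => Complex.I * f z) w := by
    rw [ha_def, ← cfc_const_mul Complex.I f w hf]
  have hkey : NormedSpace.exp (Complex.I • a) = w := by
    have hnormal : IsStarNormal (Complex.I • a) := by
      rw [hIa]; exact cfc_predicate _ w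
    rw [← CFC.complex_exp_eq_normedSpace_exp, hIa,
      ← cfc_comp' Complex.exp (fun z => Complex.I * f z) w
        (Complex.continuous_exp.continuousOn) hg]
    calc cfc (Complex.exp ∘ fun z => Complex.I * f z) w
        = cfc (id : ℂ → ℂ) w := by
          apply cfc_congr
          intro z hz
          simp only [Function.comp_apply, id_eq, hf_def]
          rw [mul_comm]
          have := Complex.norm_mul_exp_arg_mul_I z
          rw [habs z hz] at this
          simpa using this
      _ = w := cfc_id ℂ w
  -- the path `t ↦ exp (t • I • a)`
  set g : ℝ → A := fun t => NormedSpace.exp (((t : ℂ) * Complex.I) • a) with hg_def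
  letI : NormedAlgebra ℚ A := NormedAlgebra.restrictScalars ℚ ℂ A
  have hgc : Continuous g := by
    apply exp_continuous.comp
    exact ((Complex.continuous_ofReal.mul continuous_const).smul continuous_const)
  have hgu : ∀ t : ℝ, g t ∈ unitary A := by
    intro t
    apply exp_mem_unitary_of_mem_skewAdjoint
    rw [skewAdjoint.mem_iff, star_smul, ha.star_eq]
    rw [show star ((t : ℂ) * Complex.I) = -((t : ℂ) * Complex.I) by
      simp [Complex.ext_iff]]
    rw [neg_smul]
  have hg0 : g 0 = 1 := by simp [hg_def, NormedSpace.exp_zero]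
  have hg1 : g 1 = w := by
    simp only [hg_def, Complex.ofReal_one, one_mul]
    exact hkey
  -- conclude by connectedness of the image of `[0,1]`
  have hconn : IsPreconnected (g '' Set.Icc (0:ℝ) 1) :=
    isPreconnected_Icc.image g hgc.continuousOn
  have hsub : g '' Set.Icc (0:ℝ) 1 ⊆ (unitary A : Set A) := by
    rintro x ⟨t, -, rfl⟩; exact hgu t
  have h1mem : (1 : A) ∈ g '' Set.Icc (0:ℝ) 1 :=
    ⟨0, by norm_num, hg0⟩
  have hwmem : w ∈ g '' Set.Icc (0:ℝ) 1 :=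
    ⟨1, by norm_num, hg1⟩
  exact hconn.subset_connectedComponentIn h1mem hsub hwmem

/-- Two unitaries in different connected components of the unitary group of a
unital C*-algebra are at distance exactly `2`. -/
theorem stmt_12 {A : Type*} [NormedRing A] [StarRing A] [CStarRing A]
    [NormedAlgebra ℂ A] [StarModule ℂ A] [CompleteSpace A]
    (u v : A) (hu : u ∈ unitary A) (hv : v ∈ unitary A)
    (hdiff : v ∉ connectedComponentIn (unitary A : Set A) u) :
    ‖u - v‖ = 2 := by
  rcases subsingleton_or_nontrivial A with hA | hA
  · exact absurd (Subsingleton.elim u v ▸ mem_connectedComponentIn hu) hdiff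
  have hle : ‖u - v‖ ≤ 2 := by
    calc ‖u - v‖ ≤ ‖u‖ + ‖v‖ := norm_sub_le u v
      _ = 2 := by rw [CStarRing.norm_of_mem_unitary hu, CStarRing.norm_of_mem_unitary hv]; norm_num
  by_contra hne
  have hlt : ‖u - v‖ < 2 := lt_of_le_of_ne hle hne
  set w : A := star u * v with hw_def
  have hw : w ∈ unitary A := mul_mem (Unitary.star_mem hu) hv
  have huw : u * w = v := by
    rw [hw_def, ← mul_assoc, Unitary.mul_star_self_of_mem hu, one_mul]
  have hnw : ‖(1 : A) - w‖ < 2 := by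
    have : u * ((1 : A) - w) = u - v := by
      rw [mul_sub, mul_one, huw]
    calc ‖(1 : A) - w‖ = ‖u * ((1 : A) - w)‖ := (CStarRing.norm_mem_unitary_mul _ hu).symm
      _ = ‖u - v‖ := by rw [this]
      _ < 2 := hlt
  have hwcomp : w ∈ connectedComponentIn (unitary A : Set A) 1 :=
    aux_near_one hw hnw
  -- translate by `u`
  apply hdiff
  have hconn : IsPreconnected ((fun x => u * x) '' connectedComponentIn (unitary A : Set A) 1) :=
    (isPreconnected_connectedComponentIn).image _ (continuous_mul_left u).continuousOn
  have hsub : (fun x => u * x) '' connectedComponentIn (unitary A : Set A) 1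
      ⊆ (unitary A : Set A) := by
    rintro x ⟨y, hy, rfl⟩
    exact mul_mem hu (connectedComponentIn_subset _ _ hy)
  have humem : u ∈ (fun x => u * x) '' connectedComponentIn (unitary A : Set A) 1 :=
    ⟨1, mem_connectedComponentIn (one_mem (unitary A)), mul_one u⟩
  have hvmem : v ∈ (fun x => u * x) '' connectedComponentIn (unitary A : Set A) 1 :=
    ⟨w, hwcomp, huw⟩
  exact hconn.subset_connectedComponentIn humem hsub hvmem
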